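/- Suppose m ≥ 3 and X ≠ {0}. If R is nonexpansive, i.e. ‖Rx‖ ≤ ‖x‖ for every x ∈ 𝐗, then λ_i = 1/m for every i ∈ I. -/

import Mathlib

/-- If `m ≥ 3`, `X ≠ {0}`, and `R` is nonexpansive (on `X^m` with the
Hilbert product norm), then `λ i = 1/m` for every `i`. -/
theorem equal_weights_of_R_nonexpansive
    {X : Type*} [NormedAddCommGroup X] [InnerProductSpace ℝ X] [Nontrivial X]
    (m : ℕ) (hm : 3 ≤ m)
    (lam : Fin m → ℝ) (hlam : ∀ i, lam i ∈ Set.Ioo (0 : ℝ) 1)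
    (hsum : ∑ i, lam i = 1)
    (mu : Fin m → ℝ) (hmu : ∀ i, mu i = 1 - lam i)
    (R : PiLp 2 (fun _ : Fin m => X) → PiLp 2 (fun _ : Fin m => X))
    (hR : ∀ x i, R x i = ∑ j ∈ Finset.univ.erase i, (lam j / mu i) • x j)
    (hne : ∀ x, ‖R x‖ ≤ ‖x‖) :
    ∀ i, lam i = 1 / m := by
  obtain ⟨v, hv⟩ := exists_ne (0 : X)
  have hvn : ‖v‖ ≠ 0 := norm_ne_zero_iff.2 hv
  set u : X := ‖v‖⁻¹ • v with hu
  have hu1 : ‖u‖ = 1 := by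
    rw [hu, norm_smul, norm_inv, norm_norm, inv_mul_cancel₀ hvn]
  have hmupos : ∀ i, 0 < mu i := fun i => by rw [hmu i]; linarith [(hlam i).2]
  have hmune : ∀ i, mu i ≠ 0 := fun i => (hmupos i).ne'
  have hsumerase : ∀ k : Fin m, ∑ j ∈ Finset.univ.erase k, lam j = 1 - lam k := by
    intro k
    rw [Finset.sum_erase_eq_sub (Finset.mem_univ k), hsum]
  have hcardR : ∀ k : Fin m, (((Finset.univ : Finset (Fin m)).erase k).card : ℝ)
      = (m:ℝ) - 1 := by
    intro k
    rw [Finset.card_erase_of_mem (Finset.mem_univ k), Finset.card_univ, Fintype.card_fin]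
    have h1 : (1:ℕ) ≤ m := by omega
    push_cast [Nat.cast_sub h1]
    ring
  -- Key step: lam k * S k = 1
  have key : ∀ k : Fin m, lam k * (∑ i ∈ Finset.univ.erase k, (mu i)⁻¹) = 1 := by
    intro k
    set S := ∑ i ∈ Finset.univ.erase k, (mu i)⁻¹ with hS
    set Q := ∑ i ∈ Finset.univ.erase k, ((mu i)⁻¹)^2 with hQ
    have main : ∀ ε : ℝ, (lam k^2*Q - 1)*ε^2 + 2*(lam k*S - 1)*ε ≤ 0 := by
      intro ε
      set c : Fin m → ℝ := fun i => if i = k then 1+ε else 1 with hc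
      set x : PiLp 2 (fun _ : Fin m => X) := WithLp.toLp 2 (fun i => c i • u) with hx
      have hxi : ∀ i, x i = c i • u := fun i => rfl
      have hxsq : ‖x‖^2 = (1+ε)^2 + ((m:ℝ) - 1) := by
        rw [PiLp.norm_sq_eq_of_L2]
        have h1 : ∀ i, ‖x i‖^2 = (c i)^2 := by
          intro i
          rw [hxi i, norm_smul, hu1, mul_one, Real.norm_eq_abs, sq_abs]
        simp only [h1]
        rw [← Finset.add_sum_erase _ _ (Finset.mem_univ k)]
        have h2 : ∀ i ∈ Finset.univ.erase k, (c i)^2 = 1 := by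
          intro i hi
          have hik : i ≠ k := Finset.ne_of_mem_erase hi
          simp [hc, hik]
        have hck : c k = 1 + ε := by simp [hc]
        rw [Finset.sum_congr rfl h2, Finset.sum_const, hck, nsmul_eq_mul, mul_one, hcardR k]
      have hRxi : ∀ i, R x i = (if i = k then 1 else 1 + ε * (lam k * (mu i)⁻¹)) • u := by
        intro i
        rw [hR x i]
        have h1 : ∀ j ∈ Finset.univ.erase i, (lam j / mu i) • x j
            = ((lam j / mu i) * c j) • u := by
          intro j _
          rw [hxi j, smul_smul]
        rw [Finset.sum_congr rfl h1, ← Finset.sum_smul]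
        congr 1
        by_cases hik : i = k
        · subst hik
          rw [if_pos rfl]
          have h2 : ∀ j ∈ Finset.univ.erase i, (lam j / mu i) * c j = lam j / mu i := by
            intro j hj
            have hji : j ≠ i := Finset.ne_of_mem_erase hj
            simp [hc, hji]
          rw [Finset.sum_congr rfl h2, ← Finset.sum_div, hsumerase i, ← hmu i]
          exact div_self (hmune i)
        · rw [if_neg hik]
          have h2 : ∀ j ∈ Finset.univ.erase i, (lam j / mu i) * c j
              = lam j / mu i + ε * ((if j = k then lam k else 0) * (mu i)⁻¹) := by
            intro j _
            by_cases hjk : j = k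
            · subst hjk
              have hcj : c j = 1 + ε := by simp [hc]
              rw [hcj, if_pos rfl, div_eq_mul_inv]
              ring
            · simp [hc, hjk]
          rw [Finset.sum_congr rfl h2, Finset.sum_add_distrib, ← Finset.sum_div,
            hsumerase i]
          have h3 : ∑ j ∈ Finset.univ.erase i, ε * ((if j = k then lam k else 0) * (mu i)⁻¹)
              = ε * (lam k * (mu i)⁻¹) := by
            rw [← Finset.mul_sum, ← Finset.sum_mul, Finset.sum_ite_eq' (Finset.univ.erase i) k
              (fun _ => lam k)]
            have hk : k ∈ Finset.univ.erase i :=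
              Finset.mem_erase.2 ⟨fun h => hik h.symm, Finset.mem_univ k⟩
            rw [if_pos hk]
          rw [h3]
          have h4 : (1 - lam i) / mu i = 1 := by
            rw [← hmu i]; exact div_self (hmune i)
          rw [h4]
      have hRxsq : ‖R x‖^2 = 1 + ∑ i ∈ Finset.univ.erase k, (1 + ε * (lam k * (mu i)⁻¹))^2 := by
        rw [PiLp.norm_sq_eq_of_L2]
        have h1 : ∀ i, ‖R x i‖^2 = (if i = k then 1 else 1 + ε * (lam k * (mu i)⁻¹))^2 := by
          intro i
          rw [hRxi i, norm_smul, hu1, mul_one, Real.norm_eq_abs, sq_abs]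
        simp only [h1]
        rw [← Finset.add_sum_erase _ _ (Finset.mem_univ k), if_pos rfl, one_pow]
        congr 1
        refine Finset.sum_congr rfl (fun i hi => ?_)
        rw [if_neg (Finset.ne_of_mem_erase hi)]
      have hineq : ‖R x‖^2 ≤ ‖x‖^2 := pow_le_pow_left₀ (norm_nonneg _) (hne x) 2
      rw [hRxsq, hxsq] at hineq
      have hexpand : ∑ i ∈ Finset.univ.erase k, (1 + ε * (lam k * (mu i)⁻¹))^2
          = ((m:ℝ) - 1) + 2*ε*lam k*S + ε^2*lam k^2*Q := by
        have h1 : ∀ i ∈ Finset.univ.erase k, (1 + ε * (lam k * (mu i)⁻¹))^2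
            = 1 + (2*ε*lam k)*(mu i)⁻¹ + (ε^2*lam k^2)*((mu i)⁻¹)^2 := by
          intro i _
          ring
        rw [Finset.sum_congr rfl h1, Finset.sum_add_distrib, Finset.sum_add_distrib,
          Finset.sum_const, ← Finset.mul_sum, ← Finset.mul_sum, nsmul_eq_mul, mul_one,
          hcardR k, ← hS, ← hQ]
      rw [hexpand] at hineq
      nlinarith [hineq]
    set A := lam k^2*Q - 1 with hA
    set B := lam k*S - 1 with hB
    have hB0 : B = 0 := by
      by_contra hB0
      set t : ℝ := (|A|+1)⁻¹ with ht'
      have ht : (0:ℝ) < t := by positivity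
      have h1 := main (B * t)
      have h2 : 1 ≤ A * t + 2 := by
        have ha : |A * t| ≤ 1 := by
          rw [abs_mul, ht', abs_inv, abs_of_pos (by positivity : (0:ℝ) < |A|+1),
            mul_inv_le_iff₀ (by positivity), one_mul]
          linarith [abs_nonneg A]
        have := neg_abs_le (A * t)
        linarith
      have hBsq : 0 < B^2 := by positivity
      nlinarith [h1, h2, hBsq, ht, mul_pos (mul_pos hBsq ht)
        (show (0:ℝ) < A*t+2 by linarith)]
    have : lam k * S = 1 := by rw [hB] at hB0; linarith
    exact this
  -- lam k * mu k * T = 1 for T = ∑ 1/mu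
  set T := ∑ i, (mu i)⁻¹ with hT
  have key2 : ∀ k, lam k * mu k * T = 1 := by
    intro k
    have h1 : ∑ i ∈ Finset.univ.erase k, (mu i)⁻¹ = T - (mu k)⁻¹ :=
      Finset.sum_erase_eq_sub (Finset.mem_univ k)
    have h2 := key k
    rw [h1] at h2
    have h3 : mu k * (mu k)⁻¹ = 1 := mul_inv_cancel₀ (hmune k)
    linear_combination mu k * h2 + lam k * h3 + hmu k
  have hne3 : Nonempty (Fin m) := ⟨⟨0, by omega⟩⟩
  have hTpos : 0 < T := by
    rw [hT]
    exact Finset.sum_pos (fun i _ => inv_pos.2 (hmupos i)) Finset.univ_nonempty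
  have heq : ∀ i j, lam i * mu i = lam j * mu j := by
    intro i j
    have := (key2 i).trans (key2 j).symm
    exact mul_right_cancel₀ hTpos.ne' this
  have hall : ∀ i j : Fin m, lam i = lam j := by
    intro i j
    by_contra hne'
    have h := heq i j
    rw [hmu i, hmu j] at h
    have hfac : (lam i - lam j) * (1 - lam i - lam j) = 0 := by linear_combination h
    have hsum1 : lam i + lam j = 1 := by
      rcases mul_eq_zero.1 hfac with h' | h'
      · exact absurd (by linarith) hne'
      · linarith
    have hij : i ≠ j := fun h'' => hne' (by rw [h''])
    have hsub : ({i, j} : Finset (Fin m)) ⊆ Finset.univ := Finset.subset_univ _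
    have h3 : 0 < ∑ l ∈ Finset.univ \ {i, j}, lam l := by
      apply Finset.sum_pos (fun l _ => (hlam l).1)
      rw [← Finset.card_pos, Finset.card_sdiff_of_subset hsub, Finset.card_univ, Fintype.card_fin,
        Finset.card_pair hij]
      omega
    have h4 := Finset.sum_sdiff (f := lam) hsub
    rw [hsum, Finset.sum_pair hij] at h4
    linarith
  intro i
  have h5 : ∑ j, lam j = (m:ℝ) * lam i := by
    rw [Finset.sum_congr rfl (fun j _ => hall j i), Finset.sum_const, Finset.card_univ,
      Fintype.card_fin, nsmul_eq_mul]
  rw [hsum] at h5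
  have hm0 : (m:ℝ) ≠ 0 := by positivity
  field_simp
  linarith
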